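/- Let f : ℝ^(n×r) → ℝ be differentiable with L-Lipschitz gradient, and let M ⊂ ℝ^(n×r) be a set with retraction R satisfying ‖R_X(ξ) − X‖ ≤ M₁‖ξ‖ and ‖R_X(ξ) − (X+ξ)‖ ≤ M₂‖ξ‖² for all X ∈ M and tangent vectors ξ, and suppose ‖∇f(X)‖ ≤ G for all X ∈ M. Then for all X ∈ M, tangent ξ, and α > 0: f(R_X(αξ)) − f(X) ≤ α⟨∇f(X), ξ⟩ + (M₂G + LM₁²/2) α² ‖ξ‖². -/

import Mathlib

lemma descent_lemma {E : Type*} [NormedAddCommGroup E] [InnerProductSpace ℝ E] [CompleteSpace E]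
    (f : E → ℝ) (gf : E → E) (hgf : ∀ x, HasGradientAt f (gf x) x)
    (L : ℝ) (hL : ∀ x y, ‖gf x - gf y‖ ≤ L * ‖x - y‖) (X Y : E) :
    f Y - f X ≤ (inner ℝ (gf X) (Y - X) : ℝ) + L / 2 * ‖Y - X‖ ^ 2 := by
  set v := Y - X with hv
  have hline : ∀ t : ℝ, HasDerivAt (fun t : ℝ => X + t • v) v t := fun t => by
    simpa using ((hasDerivAt_id t).smul_const v).const_add X
  have hφ : ∀ t : ℝ, HasDerivAt (fun t => f (X + t • v))
      (inner ℝ (gf (X + t • v)) v : ℝ) t := by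
    intro t
    have hf := (hgf (X + t • v)).hasFDerivAt
    have := hf.comp_hasDerivAt t (hline t)
    exact this
  set c : ℝ := inner ℝ (gf X) v with hc
  set g : ℝ → ℝ := fun t => f (X + t • v) - t * c - L * ‖v‖ ^ 2 / 2 * t ^ 2 with hg
  have hg' : ∀ t : ℝ, HasDerivAt g
      ((inner ℝ (gf (X + t • v)) v : ℝ) - c - L * ‖v‖ ^ 2 * t) t := by
    intro t
    have h1 : HasDerivAt (fun t : ℝ => t * c) c t := by
      simpa using (hasDerivAt_id t).mul_const c
    have h2 : HasDerivAt (fun t : ℝ => L * ‖v‖ ^ 2 / 2 * t ^ 2) (L * ‖v‖ ^ 2 * t) t := by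
      have := (hasDerivAt_pow 2 t).const_mul (L * ‖v‖ ^ 2 / 2)
      refine this.congr_deriv ?_
      rw [show (2:ℕ) - 1 = 1 from rfl]
      ring
    exact ((hφ t).sub h1).sub h2
  have key : AntitoneOn g (Set.Icc (0:ℝ) 1) := by
    apply antitoneOn_of_deriv_nonpos (convex_Icc 0 1)
    · exact fun t _ => ((hg' t).differentiableAt.continuousAt).continuousWithinAt
    · intro t _
      exact (hg' t).differentiableAt.differentiableWithinAt
    · intro t ht
      rw [interior_Icc] at ht
      rw [(hg' t).deriv]
      have h1 : (inner ℝ (gf (X + t • v)) v : ℝ) - c ≤ L * ‖v‖ ^ 2 * t := by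
        calc (inner ℝ (gf (X + t • v)) v : ℝ) - c
            = inner ℝ (gf (X + t • v) - gf X) v := by rw [hc, inner_sub_left]
          _ ≤ ‖gf (X + t • v) - gf X‖ * ‖v‖ := real_inner_le_norm _ _
          _ ≤ (L * ‖X + t • v - X‖) * ‖v‖ :=
              mul_le_mul_of_nonneg_right (hL _ _) (norm_nonneg v)
          _ = L * ‖v‖ ^ 2 * t := by
              rw [add_sub_cancel_left, norm_smul, Real.norm_eq_abs, abs_of_pos ht.1]
              ring
      linarith
  have h01 := key (Set.left_mem_Icc.2 zero_le_one) (Set.right_mem_Icc.2 zero_le_one)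
    zero_le_one
  have hg0 : g 0 = f X := by simp [hg]
  have hg1 : g 1 = f Y - c - L * ‖v‖ ^ 2 / 2 := by simp [hg, hv]
  rw [hg0, hg1] at h01
  linarith

/-- Lipschitz-type descent inequality for the pullback of a smooth
function through a retraction. -/
theorem stmt_5 {n r : ℕ}
    (f : EuclideanSpace ℝ (Fin n × Fin r) → ℝ)
    (gf : EuclideanSpace ℝ (Fin n × Fin r) → EuclideanSpace ℝ (Fin n × Fin r))
    (hgf : ∀ x, HasGradientAt f (gf x) x)
    (L : ℝ) (hL : ∀ x y, ‖gf x - gf y‖ ≤ L * ‖x - y‖)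
    (M : Set (EuclideanSpace ℝ (Fin n × Fin r)))
    (Tang : EuclideanSpace ℝ (Fin n × Fin r) → Submodule ℝ (EuclideanSpace ℝ (Fin n × Fin r)))
    (R : EuclideanSpace ℝ (Fin n × Fin r) → EuclideanSpace ℝ (Fin n × Fin r) →
      EuclideanSpace ℝ (Fin n × Fin r))
    (M₁ M₂ G : ℝ)
    (hR1 : ∀ X ∈ M, ∀ ξ ∈ Tang X, ‖R X ξ - X‖ ≤ M₁ * ‖ξ‖)
    (hR2 : ∀ X ∈ M, ∀ ξ ∈ Tang X, ‖R X ξ - (X + ξ)‖ ≤ M₂ * ‖ξ‖ ^ 2)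
    (hG : ∀ X ∈ M, ‖gf X‖ ≤ G) :
    ∀ X ∈ M, ∀ ξ ∈ Tang X, ∀ α : ℝ, 0 < α →
      f (R X (α • ξ)) - f X ≤
        α * (inner ℝ (gf X) ξ : ℝ) + (M₂ * G + L * M₁ ^ 2 / 2) * α ^ 2 * ‖ξ‖ ^ 2 := by
  intro X hX ξ hξ α hα
  rcases lt_or_ge L 0 with hLneg | hLpos
  · -- degenerate case: the space is a subsingleton
    have h0 : ∀ x : EuclideanSpace ℝ (Fin n × Fin r), x = 0 := by
      intro x
      have h := hL x 0
      have h1 : (0:ℝ) ≤ ‖gf x - gf 0‖ := norm_nonneg _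
      have h2 : (0:ℝ) ≤ ‖x - 0‖ := norm_nonneg _
      have h3 : ‖x - 0‖ = 0 := by nlinarith
      rw [sub_zero] at h3
      exact norm_eq_zero.mp h3
    have hξ0 : ξ = 0 := h0 ξ
    have hRX : R X (α • ξ) = X := by rw [h0 (R X (α • ξ)), h0 X]
    rw [hRX, hξ0]
    simp
  · -- main case
    set η := α • ξ with hη
    have hηT : η ∈ Tang X := Submodule.smul_mem _ α hξ
    set Y := R X η with hY
    have hd := descent_lemma f gf hgf L hL X Y
    have hηnorm : ‖η‖ = α * ‖ξ‖ := by
      rw [hη, norm_smul, Real.norm_eq_abs, abs_of_pos hα]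
    have hG0 : (0:ℝ) ≤ G := le_trans (norm_nonneg (gf X)) (hG X hX)
    -- inner product term
    have hsplit : Y - X = (Y - (X + η)) + η := by abel
    have hinner : (inner ℝ (gf X) (Y - X) : ℝ)
        ≤ G * (M₂ * ‖η‖ ^ 2) + α * (inner ℝ (gf X) ξ : ℝ) := by
      rw [hsplit, inner_add_right]
      have h1 : (inner ℝ (gf X) (Y - (X + η)) : ℝ) ≤ ‖gf X‖ * ‖Y - (X + η)‖ :=
        real_inner_le_norm _ _
      have h2 : ‖gf X‖ * ‖Y - (X + η)‖ ≤ G * (M₂ * ‖η‖ ^ 2) :=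
        mul_le_mul (hG X hX) (hR2 X hX η hηT) (norm_nonneg _) hG0
      have h3 : (inner ℝ (gf X) η : ℝ) = α * inner ℝ (gf X) ξ := real_inner_smul_right _ _ _
      linarith
    -- norm term
    have hnorm : ‖Y - X‖ ^ 2 ≤ M₁ ^ 2 * ‖η‖ ^ 2 := by
      have h := hR1 X hX η hηT
      nlinarith [norm_nonneg (Y - X), norm_nonneg η]
    have hnorm' : L / 2 * ‖Y - X‖ ^ 2 ≤ L / 2 * (M₁ ^ 2 * ‖η‖ ^ 2) :=
      mul_le_mul_of_nonneg_left hnorm (by linarith)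
    have hηsq : ‖η‖ ^ 2 = α ^ 2 * ‖ξ‖ ^ 2 := by rw [hηnorm]; ring
    rw [hηsq] at hinner hnorm'
    calc f Y - f X ≤ (inner ℝ (gf X) (Y - X) : ℝ) + L / 2 * ‖Y - X‖ ^ 2 := hd
      _ ≤ G * (M₂ * (α ^ 2 * ‖ξ‖ ^ 2)) + α * (inner ℝ (gf X) ξ : ℝ)
          + L / 2 * (M₁ ^ 2 * (α ^ 2 * ‖ξ‖ ^ 2)) := by linarith
      _ = α * (inner ℝ (gf X) ξ : ℝ) + (M₂ * G + L * M₁ ^ 2 / 2) * α ^ 2 * ‖ξ‖ ^ 2 := by ring
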